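/- Let A ∈ ℤ^{r×n} have rank r and suppose A x = 0 has a strictly positive solution. Then for any submatrix obtained from A by a sequence of k pivot column-eliminations at positions (i_1,j_1), …, (i_k,j_k) (each pivot entry nonzero), with the pivot rows and columns deleted, every row of the resulting (r−k) × (n−k) matrix contains at least one positive entry and at least one negative entry. -/

import Mathlib

/-- Pivot column-elimination at position `(i,j)` followed by deletion of row `i` and
column `j`. -/
noncomputable def pivotDel {r n : ℕ} (M : Matrix (Fin (r + 1)) (Fin (n + 1)) ℝ)
    (i : Fin (r + 1)) (j : Fin (n + 1)) : Matrix (Fin r) (Fin n) ℝ :=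
  fun a s => M (i.succAbove a) (j.succAbove s) -
    M i (j.succAbove s) / M i j * M (i.succAbove a) j

/-- `Elim M B` means that `B` is obtained from `M` by a finite sequence of pivot
column-eliminations (each with a nonzero pivot entry), deleting the pivot row and
column at each step. -/
inductive Elim : {r n r' n' : ℕ} → Matrix (Fin r) (Fin n) ℝ → Matrix (Fin r') (Fin n') ℝ → Prop
  | refl {r n : ℕ} (M : Matrix (Fin r) (Fin n) ℝ) : Elim M M
  | step {r n r' n' : ℕ} (M : Matrix (Fin (r + 1)) (Fin (n + 1)) ℝ)
      (i : Fin (r + 1)) (j : Fin (n + 1)) (B : Matrix (Fin r') (Fin n') ℝ) :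
      M i j ≠ 0 → Elim (pivotDel M i j) B → Elim M B

/-- A strictly positive solution is preserved by a pivot-deletion step. -/
lemma pivotDel_mulVec {r n : ℕ} (M : Matrix (Fin (r + 1)) (Fin (n + 1)) ℝ)
    (i : Fin (r + 1)) (j : Fin (n + 1)) (hij : M i j ≠ 0)
    (α : Fin (n + 1) → ℝ) (hsol : M.mulVec α = 0) :
    (pivotDel M i j).mulVec (fun s => α (j.succAbove s)) = 0 := by
  have key : ∀ x : Fin (r + 1), ∑ s : Fin n, M x (j.succAbove s) * α (j.succAbove s)
      = - (M x j * α j) := by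
    intro x
    have h0 : ∑ s', M x s' * α s' = 0 := by
      have := congrFun hsol x
      simpa [Matrix.mulVec, dotProduct] using this
    rw [Fin.sum_univ_succAbove (fun s' => M x s' * α s') j] at h0
    linarith
  have hki := key i
  funext a
  have hka := key (i.succAbove a)
  simp only [pivotDel, Matrix.mulVec, dotProduct, Pi.zero_apply]
  have expand : ∑ s : Fin n, (M (i.succAbove a) (j.succAbove s) -
      M i (j.succAbove s) / M i j * M (i.succAbove a) j) * α (j.succAbove s)
      = ∑ s : Fin n, M (i.succAbove a) (j.succAbove s) * α (j.succAbove s)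
        - (M (i.succAbove a) j / M i j) *
          ∑ s : Fin n, M i (j.succAbove s) * α (j.succAbove s) := by
    rw [Finset.mul_sum, ← Finset.sum_sub_distrib]
    exact Finset.sum_congr rfl fun s _ => by ring
  rw [expand, hka, hki]
  field_simp
  ring

/-- Linear independence of rows is preserved by a pivot-deletion step. -/
lemma pivotDel_linearIndependent {r n : ℕ} (M : Matrix (Fin (r + 1)) (Fin (n + 1)) ℝ)
    (i : Fin (r + 1)) (j : Fin (n + 1)) (hij : M i j ≠ 0)
    (hli : LinearIndependent ℝ M) :
    LinearIndependent ℝ (pivotDel M i j) := by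
  replace hli := Fintype.linearIndependent_iff.mp hli
  refine Fintype.linearIndependent_iff.mpr ?_
  intro g hg a
  set c : ℝ := ∑ a, g a * M (i.succAbove a) j with hc
  set lam : ℝ := -c / M i j with hlam
  set G : Fin (r + 1) → ℝ := i.insertNth lam g with hG
  have hgrow : ∀ s : Fin n, ∑ a, g a * (pivotDel M i j) a s = 0 := by
    intro s
    have := congrFun hg s
    simpa [Finset.sum_apply] using this
  have hGrow : ∀ s' : Fin (n + 1), ∑ x, G x * M x s' = 0 := by
    intro s'
    rw [Fin.sum_univ_succAbove (fun x => G x * M x s') i]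
    simp only [hG, Fin.insertNth_apply_same, Fin.insertNth_apply_succAbove]
    rcases eq_or_ne s' j with rfl | hne
    · rw [hlam, ← hc]
      field_simp
      ring
    · obtain ⟨s, rfl⟩ := Fin.exists_succAbove_eq hne
      have h1 := hgrow s
      simp only [pivotDel] at h1
      have h2 : ∑ a, g a * M (i.succAbove a) (j.succAbove s)
          = M i (j.succAbove s) / M i j * c := by
        have expand : ∑ a, g a * (M (i.succAbove a) (j.succAbove s) -
            M i (j.succAbove s) / M i j * M (i.succAbove a) j)
            = ∑ a, g a * M (i.succAbove a) (j.succAbove s)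
              - M i (j.succAbove s) / M i j * ∑ a, g a * M (i.succAbove a) j := by
          rw [Finset.mul_sum, ← Finset.sum_sub_distrib]
          exact Finset.sum_congr rfl fun a _ => by ring
        rw [expand, ← hc] at h1
        linarith
      rw [h2, hlam]
      field_simp
      ring
  have hGzero : ∀ x, G x = 0 := by
    apply hli G
    funext s'
    have := hGrow s'
    simpa [Finset.sum_apply] using this
  have := hGzero (i.succAbove a)
  simpa [hG, Fin.insertNth_apply_succAbove] using this

/-- If `A ∈ ℤ^{r×n}` has rank `r` and `Ax = 0` has a strictly positive solution, then
every matrix obtained from `A` by a sequence of pivot column-eliminations (pivot rows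
and columns deleted) has, in each row, at least one positive and at least one negative
entry. -/
theorem stmt15 (r n r' n' : ℕ) (A : Matrix (Fin r) (Fin n) ℤ)
    (hrank : (A.map (Int.cast : ℤ → ℝ)).rank = r)
    (α : Fin n → ℝ) (hpos : ∀ j, 0 < α j)
    (hsol : (A.map (Int.cast : ℤ → ℝ)).mulVec α = 0)
    (B : Matrix (Fin r') (Fin n') ℝ)
    (hB : Elim (A.map (Int.cast : ℤ → ℝ)) B) :
    ∀ i : Fin r', (∃ j, 0 < B i j) ∧ (∃ j, B i j < 0) := by
  have main : ∀ {p q p' q' : ℕ} (M : Matrix (Fin p) (Fin q) ℝ)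
      (C : Matrix (Fin p') (Fin q') ℝ), Elim M C →
      LinearIndependent ℝ M → ∀ β : Fin q → ℝ, (∀ s, 0 < β s) → M.mulVec β = 0 →
      LinearIndependent ℝ C ∧ ∃ γ : Fin q' → ℝ, (∀ s, 0 < γ s) ∧ C.mulVec γ = 0 := by
    intro p q p' q' M C hMC
    induction hMC with
    | refl M => exact fun hli β hβ hβ0 => ⟨hli, β, hβ, hβ0⟩
    | step M i j C hij _ ih =>
      intro hli β hβ hβ0
      exact ih (pivotDel_linearIndependent M i j hij hli) (fun s => β (j.succAbove s))
        (fun s => hβ _) (pivotDel_mulVec M i j hij β hβ0)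
  have hli0 : LinearIndependent ℝ (A.map (Int.cast : ℤ → ℝ)) := by
    rw [Matrix.rank_eq_finrank_span_row] at hrank
    exact linearIndependent_iff_card_eq_finrank_span.mpr (by rw [Fintype.card_fin]; exact hrank.symm)
  obtain ⟨hliB, γ, hγ, hγ0⟩ := main _ _ hB hli0 α hpos hsol
  intro a
  have hrow : B a ≠ 0 := hliB.ne_zero a
  have hsum : ∑ s, B a s * γ s = 0 := by
    have := congrFun hγ0 a
    simpa [Matrix.mulVec, dotProduct] using this
  obtain ⟨s0, hs0⟩ : ∃ s, B a s ≠ 0 := by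
    by_contra h
    push_neg at h
    exact hrow (funext h)
  constructor
  · by_contra h
    push_neg at h
    have hlt : ∑ s, B a s * γ s < ∑ s : Fin n', (0 : ℝ) := by
      refine Finset.sum_lt_sum (fun s _ => mul_nonpos_of_nonpos_of_nonneg (h s) (hγ s).le)
        ⟨s0, Finset.mem_univ s0, ?_⟩
      exact mul_neg_of_neg_of_pos (lt_of_le_of_ne (h s0) hs0) (hγ s0)
    simp only [Finset.sum_const_zero] at hlt
    linarith
  · by_contra h
    push_neg at h
    have hlt : ∑ s : Fin n', (0 : ℝ) < ∑ s, B a s * γ s := by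
      refine Finset.sum_lt_sum (fun s _ => mul_nonneg (h s) (hγ s).le)
        ⟨s0, Finset.mem_univ s0, ?_⟩
      exact mul_pos (lt_of_le_of_ne (h s0) (Ne.symm hs0)) (hγ s0)
    simp only [Finset.sum_const_zero] at hlt
    linarith
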